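/- Assume p is odd, (q, n) is admissible, and n > 1. If x, y ∈ AGL_1^{(n)}(q) have orders n and 2 respectively and have no common fixed point in F, then x and y generate AGL_1^{(n)}(q). -/

import Mathlib

/-- The multiplicative stabilizer of an additive subgroup of a finite field is a subfield. -/
def mulStab (F : Type) [Field F] [Finite F] (T : AddSubgroup F) : Subfield F where
  carrier := {r : F | ∀ t ∈ T, r * t ∈ T}
  mul_mem' := by
    intro a b ha hb t ht
    rw [mul_assoc]; exact ha _ (hb t ht)
  one_mem' := by intro t ht; rw [one_mul]; exact ht
  add_mem' := by intro a b ha hb t ht; rw [add_mul]; exact T.add_mem (ha t ht) (hb t ht)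
  zero_mem' := by intro t ht; rw [zero_mul]; exact T.zero_mem
  neg_mem' := by intro a ha t ht; rw [neg_mul]; exact T.neg_mem (ha t ht)
  inv_mem' := by
    intro r hr
    rcases eq_or_ne r 0 with h | h
    · intro t ht; rw [h, inv_zero, zero_mul]; exact T.zero_mem
    · intro t ht
      have hinj : Function.Injective (fun s : T => (⟨r * (s : F), hr _ s.2⟩ : T)) := by
        intro s1 s2 hs
        have : r * (s1 : F) = r * (s2 : F) := congrArg Subtype.val hs
        exact Subtype.ext (mul_left_cancel₀ h this)
      have hsurj := (Finite.injective_iff_surjective).mp hinj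
      obtain ⟨s, hs⟩ := hsurj ⟨t, ht⟩
      have hst : r * (s : F) = t := congrArg Subtype.val hs
      have : r⁻¹ * t = (s : F) := by rw [← hst, inv_mul_cancel_left₀ h]
      rw [this]; exact s.2

theorem subfield_closure_eq_top {p e n : ℕ} (hp : p.Prime) (he : 1 ≤ e)
    {F : Type} [Field F] [Fintype F] [CharP F p] (hq : Fintype.card F = p ^ e)
    (hadm : IsLeast {i : ℕ | 1 ≤ i ∧ p ^ i ≡ 1 [MOD n]} e)
    {a : F} (han : orderOf a = n) (hn1 : 1 < n) :
    Subfield.closure ({a} : Set F) = ⊤ := by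
  set K := Subfield.closure ({a} : Set F) with hK
  haveI : Fintype K := Fintype.ofFinite K
  haveI : CharP K p := K.subtype.charP (Subtype.val_injective) p
  obtain ⟨d, -, hd⟩ := FiniteField.card K p
  have haK : a ∈ K := Subfield.subset_closure rfl
  set a' : K := ⟨a, haK⟩ with ha'
  have horder : orderOf a' = n := by
    rw [← han]; exact (orderOf_injective K.subtype.toMonoidHom Subtype.val_injective a').symm
  have ha0 : a' ≠ 0 := by
    intro h0
    rw [h0] at horder
    rw [orderOf_eq_zero_iff.mpr ?_] at horder
    · omega
    · intro hfin
      obtain ⟨k, hk, hk1⟩ := hfin.exists_pow_eq_one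
      rw [zero_pow (by omega)] at hk1
      exact zero_ne_one hk1
  have hdvd : n ∣ p ^ (d : ℕ) - 1 := by
    rw [← horder, ← hd]
    exact orderOf_dvd_of_pow_eq_one (FiniteField.pow_card_sub_one_eq_one a' ha0)
  have hped : 1 ≤ p ^ (d : ℕ) := Nat.one_le_pow _ _ hp.pos
  have hmod : p ^ (d : ℕ) ≡ 1 [MOD n] := ((Nat.modEq_iff_dvd' hped).mpr hdvd).symm
  have hed : e ≤ (d : ℕ) := hadm.2 ⟨d.pos, hmod⟩
  have hcardle : Fintype.card K ≤ Fintype.card F :=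
    Fintype.card_le_of_injective _ Subtype.val_injective
  have hde : (d : ℕ) = e := by
    have : p ^ (d : ℕ) ≤ p ^ e := by rw [← hd, ← hq]; exact hcardle
    have := (Nat.pow_le_pow_iff_right hp.one_lt).mp this
    omega
  have hcards : Fintype.card K = Fintype.card F := by rw [hd, hde, hq]
  have hbij : Function.Bijective (Subtype.val : K → F) :=
    (Fintype.bijective_iff_injective_and_card _).mpr ⟨Subtype.val_injective, hcards⟩
  ext v
  simp only [Subfield.mem_top, iff_true]
  obtain ⟨k, hk⟩ := hbij.2 v
  rw [← hk]; exact k.2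

/-- Let `p` be an odd prime, `e ≥ 1`, `q = p^e`, `F` a finite field
with `q` elements, `n` an even divisor of `q - 1`, and `S` the subgroup of order `n`
of `Fˣ`.  Assume `(q, n)` is admissible and `n > 1`, and let `A = AGL₁⁽ⁿ⁾(q)` be the
subgroup of `Perm F` of affine maps `v ↦ a v + b` with `a ∈ S`, `b ∈ F`.  If
`x, y ∈ A` have orders `n` and `2` respectively and have no common fixed point in `F`,
then `x` and `y` generate `A`. -/
theorem AGL_generated_by_order_n_and_involution
    (p e n : ℕ) (hp : p.Prime) (hodd : Odd p) (he : 1 ≤ e)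
    (F : Type) [Field F] [Fintype F] (hq : Fintype.card F = p ^ e)
    (hn : n ∣ p ^ e - 1) (hneven : Even n)
    (S : Subgroup Fˣ) (hS : Nat.card S = n)
    (hadm : IsLeast {i : ℕ | 1 ≤ i ∧ p ^ i ≡ 1 [MOD n]} e)
    (hn1 : 1 < n)
    (A : Subgroup (Equiv.Perm F))
    (hA : ∀ g : Equiv.Perm F,
      g ∈ A ↔ ∃ a ∈ S, ∃ b : F, ∀ v : F, g v = (a : F) * v + b)
    (x y : Equiv.Perm F) (hx : x ∈ A) (hy : y ∈ A)
    (hxo : orderOf x = n) (hyo : orderOf y = 2)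
    (hfix : ¬ ∃ v : F, x v = v ∧ y v = v) :
    Subgroup.closure ({x, y} : Set (Equiv.Perm F)) = A := by
  classical
  -- characteristic
  haveI : CharP F (ringChar F) := ringChar.charP F
  have hrP : (ringChar F).Prime := CharP.char_is_prime F _
  obtain ⟨m, -, hm⟩ := FiniteField.card F (ringChar F)
  have hpr : ringChar F = p := by
    have h1 : p ∣ ringChar F ^ (m : ℕ) := by
      rw [← hm, hq]; exact dvd_pow_self p (by omega)
    exact ((Nat.prime_dvd_prime_iff_eq hp hrP).mp (hp.dvd_of_dvd_pow h1)).symm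
  haveI hcharp : CharP F p := hpr ▸ ringChar.charP F
  -- data of x and y
  obtain ⟨ax, haxS, bx, hxf⟩ := (hA x).mp hx
  obtain ⟨ay, hayS, yb, hyf⟩ := (hA y).mp hy
  have ha0 : (ax : F) ≠ 0 := Units.ne_zero ax
  -- translations have order dividing p
  have htransp : ∀ (g : Equiv.Perm F) (t : F), (∀ v, g v = v + t) → g ^ p = 1 := by
    intro g t hg
    have hk : ∀ k : ℕ, ∀ v, (g ^ k) v = v + (k : F) * t := by
      intro k
      induction k with
      | zero => intro v; simp
      | succ k ih =>
        intro v
        rw [pow_succ, Equiv.Perm.mul_apply, hg, ih]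
        push_cast; ring
    ext v
    rw [hk p v]
    have : (p : F) = 0 := CharP.cast_eq_zero F p
    simp [this]
  have hpnotdvd : ¬ (p ∣ p ^ e - 1) := by
    intro hdvd
    have h1 : p ∣ p ^ e := dvd_pow_self p (by omega)
    have := Nat.dvd_sub h1 hdvd
    have hpe : 1 ≤ p ^ e := Nat.one_le_pow _ _ hp.pos
    rw [Nat.sub_sub_self hpe] at this
    have h2 := Nat.dvd_one.mp this
    have h3 := hp.two_le
    omega
  -- ax ≠ 1
  have hax1 : (ax : F) ≠ 1 := by
    intro h1
    have hxp : x ^ p = 1 := htransp x bx (fun v => by rw [hxf, h1, one_mul])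
    have : n ∣ p := hxo ▸ orderOf_dvd_of_pow_eq_one hxp
    have hnp : n = p := (hp.eq_one_or_self_of_dvd n this).resolve_left (by omega)
    exact hpnotdvd (hnp ▸ hn)
  -- fixed point of x
  set a : F := (ax : F) with ha_def
  set c : F := bx / (1 - a) with hc_def
  have hsub0 : (1 : F) - a ≠ 0 := fun h => hax1 (by linear_combination -h)
  have hbx : bx = c - a * c := by
    rw [hc_def]; field_simp
  have hxform : ∀ v, x v = a * (v - c) + c := by
    intro v; rw [hxf, hbx]; ring
  have hxc : x c = c := by rw [hxform]; ring
  have hxinv : ∀ v, x⁻¹ v = a⁻¹ * (v - c) + c := by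
    intro v
    apply x.injective
    rw [Equiv.Perm.inv_def, Equiv.apply_symm_apply, hxform]
    field_simp
    ring
  -- zpow formula
  have hxzpow : ∀ k : ℤ, ∀ v, (x ^ k) v = a ^ k * (v - c) + c := by
    intro k
    induction k using Int.induction_on with
    | zero => intro v; simp
    | succ i ih =>
      intro v
      rw [zpow_add_one, Equiv.Perm.mul_apply, hxform, ih, zpow_add_one₀ ha0]
      ring
    | pred i ih =>
      intro v
      rw [zpow_sub_one, Equiv.Perm.mul_apply, hxinv, ih, zpow_sub_one₀ ha0]
      field_simp
      ring
  have hxpow : ∀ k : ℕ, ∀ v, (x ^ k) v = a ^ k * (v - c) + c := by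
    intro k v
    have := hxzpow (k : ℤ) v
    rwa [zpow_natCast, zpow_natCast] at this
  -- orderOf a = n
  have hord : orderOf a = n := by
    have h1 : a ^ n = 1 := by
      have hxn : x ^ n = 1 := hxo ▸ pow_orderOf_eq_one x
      have := hxpow n (c + 1)
      rw [hxn] at this
      simp only [Equiv.Perm.one_apply] at this
      linear_combination -this
    have hd1 : orderOf a ∣ n := orderOf_dvd_of_pow_eq_one h1
    have hd2 : n ∣ orderOf a := by
      rw [← hxo]
      apply orderOf_dvd_of_pow_eq_one
      ext v
      rw [hxpow, pow_orderOf_eq_one a]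
      simp
    exact Nat.dvd_antisymm hd1 hd2
  have hordax : orderOf ax = n := by rw [← orderOf_units]; exact hord
  -- S is generated by ax
  have hSz : Subgroup.zpowers ax = S := by
    apply Subgroup.eq_of_le_of_card_ge ((Subgroup.zpowers_le).mpr haxS)
    rw [Nat.card_zpowers, hordax, hS]
  -- y is v ↦ -v + yb
  have h2F : (2 : F) ≠ 0 := by
    intro h2
    have hdvd : p ∣ 2 := (CharP.cast_eq_zero_iff F p 2).mp (by exact_mod_cast h2)
    have hp2 : p = 2 := (Nat.prime_dvd_prime_iff_eq hp Nat.prime_two).mp hdvd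
    rw [hp2] at hodd
    rcases hodd with ⟨k, hk⟩
    omega
  -- ay = -1
  have hay1 : (ay : F) ≠ 1 := by
    intro h1
    have hyp : y ^ p = 1 := htransp y yb (fun v => by rw [hyf, h1, one_mul])
    have h2p : 2 ∣ p := hyo ▸ orderOf_dvd_of_pow_eq_one hyp
    have hp2 : p = 2 := ((Nat.prime_dvd_prime_iff_eq Nat.prime_two hp).mp h2p).symm
    rw [hp2] at hodd
    rcases hodd with ⟨k, hk⟩
    omega
  have hy2 : y ^ 2 = 1 := hyo ▸ pow_orderOf_eq_one y
  have hysq : ∀ v : F, (ay : F) * ((ay : F) * v + yb) + yb = v := by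
    intro v
    have : (y ^ 2) v = v := by rw [hy2]; rfl
    rw [pow_two, Equiv.Perm.mul_apply, hyf, hyf] at this
    exact this
  have hay2 : (ay : F) = -1 := by
    have h0 := hysq 0
    have h1 := hysq 1
    have hsq : (ay : F) * (ay : F) = 1 := by linear_combination h1 - h0
    rcases mul_self_eq_one_iff.mp hsq with h | h
    · exact absurd h hay1
    · exact h
  have hyform : ∀ v, y v = -v + yb := by
    intro v; rw [hyf, hay2]; ring
  -- x and y have no common fixed point, so y c ≠ c
  have hyc : y c ≠ c := by
    intro hyc
    exact hfix ⟨c, hxc, hyc⟩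
  have hb2c : yb - 2 * c ≠ 0 := by
    intro h0
    apply hyc
    rw [hyform]
    linear_combination h0
  set t0 : F := (yb - 2 * c) * (1 - a) with ht0_def
  have ht0 : t0 ≠ 0 := mul_ne_zero hb2c hsub0
  set H := Subgroup.closure ({x, y} : Set (Equiv.Perm F)) with hH
  have hxH : x ∈ H := Subgroup.subset_closure (by simp)
  have hyH : y ∈ H := Subgroup.subset_closure (by simp)
  -- the commutator is translation by t0
  have hz : ∀ v, (y * x * y * x⁻¹) v = t0 + v := by
    intro v
    simp only [Equiv.Perm.mul_apply]
    rw [hxinv, hyform, hxform, hyform]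
    field_simp
    ring
  -- the additive subgroup of translations contained in H
  set T : AddSubgroup F :=
    { carrier := {t : F | Equiv.addLeft t ∈ H}
      zero_mem' := by
        have : Equiv.addLeft (0 : F) = 1 := by ext v; simp
        simp only [Set.mem_setOf_eq, this]
        exact one_mem H
      add_mem' := by
        intro s t hs ht
        have : Equiv.addLeft (s + t) = Equiv.addLeft s * Equiv.addLeft t := by
          ext v; simp [Equiv.Perm.mul_apply, add_assoc]
        simp only [Set.mem_setOf_eq] at *
        rw [this]
        exact mul_mem hs ht
      neg_mem' := by
        intro t ht
        have : Equiv.addLeft (-t) = (Equiv.addLeft t)⁻¹ := by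
          ext v
          simp [Equiv.Perm.inv_def]
        simp only [Set.mem_setOf_eq] at *
        rw [this]
        exact inv_mem ht } with hT
  have ht0T : t0 ∈ T := by
    show Equiv.addLeft t0 ∈ H
    have : Equiv.addLeft t0 = y * x * y * x⁻¹ := by
      ext v; rw [hz v]; simp
    rw [this]
    exact mul_mem (mul_mem (mul_mem hyH hxH) hyH) (inv_mem hxH)
  have hmulT : a ∈ mulStab F T := by
    intro t ht
    show Equiv.addLeft (a * t) ∈ H
    have : Equiv.addLeft (a * t) = x * Equiv.addLeft t * x⁻¹ := by
      ext v
      simp only [Equiv.Perm.mul_apply, Equiv.coe_addLeft]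
      rw [hxinv, hxform]
      field_simp
      ring
    rw [this]
    exact mul_mem (mul_mem hxH ht) (inv_mem hxH)
  have hstab : mulStab F T = ⊤ := by
    rw [eq_top_iff, ← subfield_closure_eq_top hp he hq hadm hord hn1]
    exact Subfield.closure_le.mpr (Set.singleton_subset_iff.mpr hmulT)
  have hTtop : ∀ t : F, t ∈ T := by
    intro t
    have hmem : (t * t0⁻¹) ∈ mulStab F T := by rw [hstab]; trivial
    have := hmem t0 ht0T
    rwa [mul_assoc, inv_mul_cancel₀ ht0, mul_one] at this
  -- conclusion
  apply le_antisymm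
  · rw [hH] at *
    apply (Subgroup.closure_le A).mpr
    intro g hg
    rcases hg with hg | hg
    · rw [hg]; exact hx
    · rw [Set.mem_singleton_iff] at hg; rw [hg]; exact hy
  · intro g hg
    obtain ⟨a', ha'S, b', hgf⟩ := (hA g).mp hg
    have : a' ∈ Subgroup.zpowers ax := hSz ▸ ha'S
    obtain ⟨k, hk⟩ := Subgroup.mem_zpowers_iff.mp this
    have hxkH : x ^ k ∈ H := zpow_mem hxH k
    have htH : Equiv.addLeft (b' - c + (a' : F) * c) ∈ H := hTtop _
    have hgform : g = Equiv.addLeft (b' - c + (a' : F) * c) * x ^ k := by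
      ext v
      simp only [Equiv.Perm.mul_apply, Equiv.coe_addLeft]
      rw [hgf, hxzpow]
      have hka : a ^ k = (a' : F) := by
        rw [← hk, ← Units.val_zpow_eq_zpow_val]
      rw [hka]
      ring
    rw [hgform]
    exact mul_mem htH hxkH
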